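/- Every cyclic bilinear form on a coalgebra is symmetric: if •_M : M × M → K satisfies (l •_M m'')·m' ⊗ m''' = (m •_M l'')·l''' ⊗ l' for all l, m ∈ M, then l •_M m = m •_M l for all l, m ∈ M. -/

import Mathlib

open scoped TensorProduct

/-- The iterated comultiplication `m ↦ m' ⊗ m'' ⊗ m'''` of a coalgebra. -/
noncomputable def comulIter3 (K : Type*) {M : Type*} [CommRing K] [AddCommGroup M]
    [Module K M] [Coalgebra K M] (m : M) : (M ⊗[K] M) ⊗[K] M :=
  LinearMap.rTensor M (Coalgebra.comul (R := K)) (Coalgebra.comul m)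

/-- `∑ i ∈ s, f i ⊗ g i ⊗ h i` is a representation of the iterated
comultiplication `m' ⊗ m'' ⊗ m'''` of `m`. -/
def IsRepr3 (K : Type*) {M : Type*} [CommRing K] [AddCommGroup M]
    [Module K M] [Coalgebra K M] (m : M) (s : Finset ℕ) (f g h : ℕ → M) : Prop :=
  ∑ i ∈ s, (f i ⊗ₜ[K] g i) ⊗ₜ[K] h i = comulIter3 K m

/-- A bilinear form `β` on a coalgebra `M` is cyclic if
`(l • m'')·m' ⊗ m''' = (m • l'')·l''' ⊗ l'` in `M ⊗ M` for all `l, m ∈ M`. -/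
def IsCyclicForm (K : Type*) {M : Type*} [CommRing K] [AddCommGroup M]
    [Module K M] [Coalgebra K M] (β : M →ₗ[K] M →ₗ[K] K) : Prop :=
  ∀ (l m : M) (sl sm : Finset ℕ) (l1 l2 l3 m1 m2 m3 : ℕ → M),
    IsRepr3 K l sl l1 l2 l3 → IsRepr3 K m sm m1 m2 m3 →
    ∑ j ∈ sm, β l (m2 j) • (m1 j ⊗ₜ[K] m3 j) =
      ∑ i ∈ sl, β m (l2 i) • (l3 i ⊗ₜ[K] l1 i)

section aux
variable {K M : Type*} [CommRing K] [AddCommGroup M] [Module K M] [Coalgebra K M]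

lemma combine_sums {α : Type*} [AddCommMonoid α]
    (s1 s2 : Finset ℕ) (F1 F2 : ℕ → α) :
    ∃ (s : Finset ℕ) (c : ℕ → Bool),
      (∑ i ∈ s, if c i then F1 i else F2 (i - (s1.sup id + 1))) =
        ∑ i ∈ s1, F1 i + ∑ i ∈ s2, F2 i := by
  set N := s1.sup id + 1 with hN
  refine ⟨s1 ∪ s2.image (· + N), fun i => decide (i < N), ?_⟩
  have hdisj : Disjoint s1 (s2.image (· + N)) := by
    rw [Finset.disjoint_left]
    intro a ha hb
    have h1 : a < N := Nat.lt_succ_of_le (Finset.le_sup (f := id) ha)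
    obtain ⟨b, _, rfl⟩ := Finset.mem_image.mp hb
    omega
  rw [Finset.sum_union hdisj]
  congr 1
  · apply Finset.sum_congr rfl
    intro i hi
    have h1 : i < N := Nat.lt_succ_of_le (Finset.le_sup (f := id) hi)
    simp [h1]
  · rw [Finset.sum_image (by intro x _ y _ h; simpa using h)]
    apply Finset.sum_congr rfl
    intro i _
    have : ¬ (i + N < N) := by omega
    simp [this]

lemma exists_repr3' (x : (M ⊗[K] M) ⊗[K] M) :
    ∃ (s : Finset ℕ) (f g h : ℕ → M), ∑ i ∈ s, (f i ⊗ₜ[K] g i) ⊗ₜ[K] h i = x := by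
  have addcase : ∀ x y : (M ⊗[K] M) ⊗[K] M,
      (∃ (s : Finset ℕ) (f g h : ℕ → M), ∑ i ∈ s, (f i ⊗ₜ[K] g i) ⊗ₜ[K] h i = x) →
      (∃ (s : Finset ℕ) (f g h : ℕ → M), ∑ i ∈ s, (f i ⊗ₜ[K] g i) ⊗ₜ[K] h i = y) →
      ∃ (s : Finset ℕ) (f g h : ℕ → M), ∑ i ∈ s, (f i ⊗ₜ[K] g i) ⊗ₜ[K] h i = x + y := by
    rintro x y ⟨s1, f1, g1, h1, rfl⟩ ⟨s2, f2, g2, h2, rfl⟩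
    obtain ⟨s, c, hc⟩ := combine_sums s1 s2
      (fun i => (f1 i ⊗ₜ[K] g1 i) ⊗ₜ[K] h1 i) (fun i => (f2 i ⊗ₜ[K] g2 i) ⊗ₜ[K] h2 i)
    set N := s1.sup id + 1
    refine ⟨s, fun i => if c i then f1 i else f2 (i - N),
      fun i => if c i then g1 i else g2 (i - N),
      fun i => if c i then h1 i else h2 (i - N), ?_⟩
    rw [← hc]
    apply Finset.sum_congr rfl
    intro i _
    by_cases h : c i <;> simp [h]
  induction x using TensorProduct.induction_on with
  | zero => exact ⟨∅, 0, 0, 0, by simp⟩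
  | tmul y c =>
    induction y using TensorProduct.induction_on with
    | zero => exact ⟨∅, 0, 0, 0, by simp⟩
    | tmul a b => exact ⟨{0}, fun _ => a, fun _ => b, fun _ => c, by simp⟩
    | add y1 y2 ih1 ih2 =>
      rw [TensorProduct.add_tmul]
      exact addcase _ _ ih1 ih2
  | add x y ih1 ih2 => exact addcase _ _ ih1 ih2

open Coalgebra in
lemma sum_eval (β' : M →ₗ[K] K) {m : M} {s : Finset ℕ} {f g h : ℕ → M}
    (hr : IsRepr3 K m s f g h) :
    ∑ i ∈ s, counit (R := K) (f i) * (β' (g i) * counit (R := K) (h i)) = β' m := by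
  classical
  set u : M ⊗[K] M →ₗ[K] M :=
    (TensorProduct.lid K M).toLinearMap ∘ₗ LinearMap.rTensor M (counit (R := K)) with hu
  set Ψ : (M ⊗[K] M) ⊗[K] M →ₗ[K] K :=
    LinearMap.mul' K K ∘ₗ TensorProduct.map (β' ∘ₗ u) (counit (R := K)) with hΨ
  have key : ∀ a b c : M, Ψ ((a ⊗ₜ[K] b) ⊗ₜ[K] c) = counit (R := K) a * (β' b * counit (R := K) c) := by
    intro a b c
    simp [hΨ, hu, mul_comm, mul_assoc, mul_left_comm]
  have h1 := congrArg Ψ hr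
  rw [map_sum] at h1
  simp only [key] at h1
  rw [h1]
  -- now show Ψ (comulIter3 K m) = β' m
  have e : (TensorProduct.map (β' ∘ₗ u) (counit (R := K))) ∘ₗ
      LinearMap.rTensor M (comul (R := K)) =
      TensorProduct.map β' (counit (R := K)) := by
    apply TensorProduct.ext'
    intro a b
    simp [hu]
  have e2 : Ψ (comulIter3 K m) =
      LinearMap.mul' K K (TensorProduct.map β' (counit (R := K)) (comul (R := K) m)) := by
    rw [hΨ]
    show LinearMap.mul' K K ((TensorProduct.map (β' ∘ₗ u) (counit (R := K)) ∘ₗ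
      LinearMap.rTensor M (comul (R := K))) (comul (R := K) m)) = _
    rw [e]
  rw [e2]
  obtain ⟨S, hS⟩ := TensorProduct.exists_finset (comul (R := K) m)
  have hm : ∑ p ∈ S, counit (R := K) p.2 • p.1 = m := by
    have := Coalgebra.lTensor_counit_comul (R := K) m
    rw [hS, map_sum] at this
    have := congrArg (TensorProduct.rid K M) this
    simpa [map_sum, TensorProduct.smul_tmul'] using this
  rw [hS, map_sum, map_sum]
  rw [← hm, map_sum]
  apply Finset.sum_congr rfl
  intro p _
  simp [mul_comm]

end aux

/-- Every cyclic bilinear form on a coalgebra is symmetric. -/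
theorem cyclic_form_symmetric
    {K M : Type*} [CommRing K] [AddCommGroup M] [Module K M] [Coalgebra K M]
    (β : M →ₗ[K] M →ₗ[K] K) (hcyc : IsCyclicForm K β) :
    ∀ l m : M, β l m = β m l := by
  intro l m
  obtain ⟨sl, l1, l2, l3, hl⟩ := exists_repr3' (comulIter3 K l)
  obtain ⟨sm, m1, m2, m3, hm⟩ := exists_repr3' (comulIter3 K m)
  have E := hcyc l m sl sm l1 l2 l3 m1 m2 m3 hl hm
  set Φ : M ⊗[K] M →ₗ[K] K :=
    LinearMap.mul' K K ∘ₗ TensorProduct.map (Coalgebra.counit (R := K)) (Coalgebra.counit (R := K)) with hΦ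
  have E2 := congrArg Φ E
  simp only [map_sum, map_smul] at E2
  have hΦt : ∀ a b : M, Φ (a ⊗ₜ[K] b) = Coalgebra.counit (R := K) a * Coalgebra.counit (R := K) b := by
    intro a b; simp [hΦ]
  simp only [hΦt, smul_eq_mul] at E2
  have L := sum_eval (β l) hm
  have R := sum_eval (β m) hl
  rw [← L, ← R]
  calc ∑ i ∈ sm, Coalgebra.counit (R := K) (m1 i) * (β l (m2 i) * Coalgebra.counit (R := K) (m3 i))
      = ∑ i ∈ sm, β l (m2 i) * (Coalgebra.counit (R := K) (m1 i) * Coalgebra.counit (R := K) (m3 i)) :=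
        Finset.sum_congr rfl fun _ _ => by ring
    _ = ∑ i ∈ sl, β m (l2 i) * (Coalgebra.counit (R := K) (l3 i) * Coalgebra.counit (R := K) (l1 i)) := E2
    _ = ∑ i ∈ sl, Coalgebra.counit (R := K) (l1 i) * (β m (l2 i) * Coalgebra.counit (R := K) (l3 i)) :=
        Finset.sum_congr rfl fun _ _ => by ring
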